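/- Let h₁, h₂ be dual quaternions with h₁h₂ ≠ h₂h₁. The set of points [R(t₁,t₂)] with R(t₁,t₂) = (t₁ − h₁)(t₂ − h₂) = t₁t₂ − t₁h₂ − t₂h₁ + h₁h₂, for t₁, t₂ ranging over ℝ ∪ {∞}, is contained in the projective 3-space spanned by [1], [h₁], [h₂], [h₁h₂]; and if 1, h₁, h₂, h₁h₂ are linearly independent, then in projective coordinates [x₀, x₁, x₂, x₃] with respect to these base points the image is exactly the quadric x₀x₃ − x₁x₂ = 0, which is a regular ruled quadric. -/

import Mathlib

open Quaternion TrivSqZeroExt Matrix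

/-- The dual quaternions: dual numbers over the real quaternions. -/
noncomputable abbrev DH := DualNumber (Quaternion ℝ)

/-- Homogeneous parameterisation of the 2R constraint surface
`R(t₁, t₂) = (t₁ - h₁)(t₂ - h₂)`, where the parameter value `∞` corresponds to
`(aᵢ : bᵢ) = (1 : 0)` and the finite value `tᵢ` to `(tᵢ : 1)`. -/
noncomputable def R2R (h₁ h₂ : DH) (a₁ b₁ a₂ b₂ : ℝ) : DH :=
  (a₁ • (1 : DH) - b₁ • h₁) * (a₂ • (1 : DH) - b₂ • h₂)

set_option synthInstance.maxHeartbeats 1000000 in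
lemma R2R_eq (h₁ h₂ : DH) (a₁ b₁ a₂ b₂ : ℝ) :
    R2R h₁ h₂ a₁ b₁ a₂ b₂ =
      (a₁*a₂) • (1:DH) - (a₁*b₂) • h₂ - (b₁*a₂) • h₁ + (b₁*b₂) • (h₁*h₂) := by
  have : IsScalarTower ℝ DH DH := ⟨fun r x y => by
    ext <;> simp [smul_add, mul_smul_comm, smul_mul_assoc, smul_comm r]⟩
  simp only [R2R, mul_sub, sub_mul, smul_mul_assoc, mul_smul_comm, smul_smul, one_mul, mul_one]
  module

lemma segre (m00 m01 m10 m11 : ℝ) (hdet : m00*m11 = m01*m10)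
    (hne : ¬(m00 = 0 ∧ m01 = 0 ∧ m10 = 0 ∧ m11 = 0)) :
    ∃ a₁ b₁ a₂ b₂ c : ℝ, (a₁,b₁) ≠ (0,0) ∧ (a₂,b₂) ≠ (0,0) ∧ c ≠ 0 ∧
      a₁*a₂ = c*m00 ∧ a₁*b₂ = c*m01 ∧ b₁*a₂ = c*m10 ∧ b₁*b₂ = c*m11 := by
  by_cases h00 : m00 ≠ 0
  · exact ⟨m00, m10, m00, m01, m00, by simp [Prod.ext_iff, h00],
      by simp [Prod.ext_iff, h00], h00, by ring, by ring, by ring,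
      by linear_combination -hdet⟩
  push_neg at h00
  subst h00
  by_cases h01 : m01 ≠ 0
  · have h10 : m10 = 0 := by
      rcases mul_eq_zero.mp (by linear_combination -hdet : m01 * m10 = 0) with h | h
      · exact absurd h h01
      · exact h
    exact ⟨m01, m11, 0, m01, m01, by simp [Prod.ext_iff, h01],
      by simp [Prod.ext_iff, h01], h01, by ring, by ring,
      by rw [h10]; ring, by ring⟩
  push_neg at h01
  subst h01
  by_cases h10 : m10 ≠ 0
  · exact ⟨0, m10, m10, m11, m10, by simp [Prod.ext_iff, h10],
      by simp [Prod.ext_iff, h10], h10, by ring, by ring, by ring, by ring⟩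
  push_neg at h10
  subst h10
  have h11 : m11 ≠ 0 := by
    intro h; exact hne ⟨rfl, rfl, rfl, h⟩
  exact ⟨0, m11, 0, m11, m11, by simp [Prod.ext_iff, h11],
    by simp [Prod.ext_iff, h11], h11, by ring, by ring, by ring, by ring⟩

/-- The kinematic image of a 2R dyad with `h₁h₂ ≠ h₂h₁`: every point
`R(t₁, t₂) = (t₁ - h₁)(t₂ - h₂)` lies in the projective three-space spanned by
`[1], [h₁], [h₂], [h₁h₂]`; and if `1, h₁, h₂, h₁h₂` are linearly independent,
then in projective coordinates `[x₀, x₁, x₂, x₃]` with respect to the base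
points `[1], [h₂], [h₁], [h₁h₂]` the image is exactly the quadric
`x₀x₃ - x₁x₂ = 0`, which is regular (its symmetric matrix is invertible) and
ruled (swept by the parameter lines). -/
theorem twoR_constraint_variety (h₁ h₂ : DH) (hcomm : h₁ * h₂ ≠ h₂ * h₁) :
    (∀ a₁ b₁ a₂ b₂ : ℝ,
      R2R h₁ h₂ a₁ b₁ a₂ b₂ ∈
        Submodule.span ℝ ({1, h₁, h₂, h₁ * h₂} : Set DH)) ∧
    (LinearIndependent ℝ ![(1 : DH), h₁, h₂, h₁ * h₂] →
      ∀ x : Fin 4 → ℝ, x ≠ 0 →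
        ((∃ a₁ b₁ a₂ b₂ c : ℝ, (a₁, b₁) ≠ (0, 0) ∧ (a₂, b₂) ≠ (0, 0) ∧ c ≠ 0 ∧
            c • (x 0 • (1 : DH) + x 1 • h₂ + x 2 • h₁ + x 3 • (h₁ * h₂)) =
              R2R h₁ h₂ a₁ b₁ a₂ b₂) ↔
          x 0 * x 3 - x 1 * x 2 = 0)) ∧
    (∃ Q : Matrix (Fin 4) (Fin 4) ℝ, Q.IsSymm ∧ IsUnit Q.det ∧
      ∀ x : Fin 4 → ℝ, x ⬝ᵥ Q.mulVec x = x 0 * x 3 - x 1 * x 2) := by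
  refine ⟨?_, ?_, ?_⟩
  · intro a₁ b₁ a₂ b₂
    rw [R2R_eq]
    have m1 : (1:DH) ∈ ({1, h₁, h₂, h₁ * h₂} : Set DH) := by simp
    have m2 : h₁ ∈ ({1, h₁, h₂, h₁ * h₂} : Set DH) := by simp
    have m3 : h₂ ∈ ({1, h₁, h₂, h₁ * h₂} : Set DH) := by simp
    have m4 : h₁ * h₂ ∈ ({1, h₁, h₂, h₁ * h₂} : Set DH) := by simp
    exact Submodule.add_mem _ (Submodule.sub_mem _
      (Submodule.sub_mem _ (Submodule.smul_mem _ _ (Submodule.subset_span m1))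
        (Submodule.smul_mem _ _ (Submodule.subset_span m3)))
      (Submodule.smul_mem _ _ (Submodule.subset_span m2)))
      (Submodule.smul_mem _ _ (Submodule.subset_span m4))
  · intro hli x hx
    constructor
    · rintro ⟨a₁, b₁, a₂, b₂, c, -, -, hc, heq⟩
      rw [R2R_eq] at heq
      have key := (Fintype.linearIndependent_iff.mp hli)
        ![c * x 0 - a₁*a₂, c * x 2 + b₁*a₂, c * x 1 + a₁*b₂, c * x 3 - b₁*b₂] ?_
      · have e0 := key 0
        have e1 := key 1
        have e2 := key 2
        have e3 := key 3
        simp only [Matrix.cons_val_zero, Matrix.cons_val_one, Matrix.head_cons,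
          Matrix.cons_val_two, Matrix.cons_val_three, Matrix.tail_cons] at e0 e1 e2 e3
        have hx0 : c * x 0 = a₁*a₂ := by linarith
        have hx2 : c * x 2 = -(b₁*a₂) := by linarith
        have hx1 : c * x 1 = -(a₁*b₂) := by linarith
        have hx3 : c * x 3 = b₁*b₂ := by linarith
        have hz : c^2 * (x 0 * x 3 - x 1 * x 2) = 0 := by
          have : (c * x 0) * (c * x 3) - (c * x 1) * (c * x 2) = 0 := by
            rw [hx0, hx1, hx2, hx3]; ring
          linear_combination this
        have hc2 : (c:ℝ)^2 ≠ 0 := pow_ne_zero _ hc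
        exact (mul_eq_zero.mp hz).resolve_left hc2
      · rw [Fin.sum_univ_four]
        simp only [Matrix.cons_val_zero, Matrix.cons_val_one, Matrix.head_cons,
          Matrix.cons_val_two, Matrix.cons_val_three, Matrix.tail_cons]
        have heq' : c • (x 0 • (1 : DH)) + c • (x 1 • h₂) + c • (x 2 • h₁)
            + c • (x 3 • (h₁ * h₂)) =
            (a₁*a₂) • (1:DH) - (a₁*b₂) • h₂ - (b₁*a₂) • h₁ + (b₁*b₂) • (h₁*h₂) := by
          rw [← heq]; module
        simp only [smul_smul] at heq'
        rw [sub_smul, add_smul, add_smul, sub_smul]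
        have := sub_eq_zero_of_eq heq'
        rw [← this]; module
    · intro hq
      obtain ⟨a₁, b₁, a₂, b₂, c, hab1, hab2, hc, e00, e01, e10, e11⟩ :=
        segre (x 0) (-(x 1)) (-(x 2)) (x 3) (by linear_combination hq)
          (by
            rintro ⟨p0, p1, p2, p3⟩
            apply hx
            funext i
            fin_cases i
            · exact p0
            · simpa using p1
            · simpa using p2
            · exact p3)
      refine ⟨a₁, b₁, a₂, b₂, c, hab1, hab2, hc, ?_⟩
      rw [R2R_eq, e00, e01, e10, e11]
      module
  · refine ⟨!![0,0,0,1/2; 0,0,-1/2,0; 0,-1/2,0,0; 1/2,0,0,0], ?_, ?_, ?_⟩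
    · rw [Matrix.IsSymm]
      ext i j
      fin_cases i <;> fin_cases j <;> rfl
    · apply Matrix.isUnit_det_of_right_inverse
        (B := (!![0,0,0,2; 0,0,-2,0; 0,-2,0,0; 2,0,0,0] : Matrix (Fin 4) (Fin 4) ℝ))
      ext i j
      fin_cases i <;> fin_cases j <;>
        simp [Matrix.mul_apply, Fin.sum_univ_four, Matrix.one_apply] <;> norm_num
    · intro x
      simp [dotProduct, Matrix.mulVec, Fin.sum_univ_four,
        Matrix.vecHead, Matrix.vecTail]
      ring
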